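/- If supp(φ) ⊂ S for an admissible set S, then P_S ∘ P_φ = P_φ. -/

import Mathlib

open MeasureTheory VectorFourier Filter Topology

noncomputable section

/-- The properties of Schwartz–Bruhat functions that are used: continuity, integrability,
integrability of the Fourier transform (with respect to the character `e`, the bilinear
form `L` and the measure `m`), and Fourier inversion (self-dual normalization of `m`). -/
structure IsSB {𝕜 : Type*} [CommRing 𝕜] {V : Type*} [AddCommGroup V] [Module 𝕜 V]
    [TopologicalSpace V] [MeasurableSpace V]
    (e : AddChar 𝕜 Circle) (m : Measure V) (L : V →ₗ[𝕜] V →ₗ[𝕜] 𝕜) (φ : V → ℂ) : Prop where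
  cont : Continuous φ
  integrable : Integrable φ m
  fourier_integrable : Integrable (fourierIntegral e m L φ) m
  inversion : ∀ v, fourierIntegral e m L (fourierIntegral e m L φ) (-v) = φ v

/-- The operator `P_φ f = ∫_V φ̂(v) • σ(v) f dm(v)` (Bochner integral). -/
def Pop {𝕜 : Type*} [CommRing 𝕜] {V : Type*} [AddCommGroup V] [Module 𝕜 V] [MeasurableSpace V]
    {H : Type*} [NormedAddCommGroup H] [NormedSpace ℂ H]
    (e : AddChar 𝕜 Circle) (m : Measure V) (L : V →ₗ[𝕜] V →ₗ[𝕜] 𝕜)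
    (σ : V → H →L[ℂ] H) (φ : V → ℂ) (f : H) : H :=
  ∫ v, fourierIntegral e m L φ v • σ v f ∂m

section Auxi

variable {𝕜 : Type*} [NontriviallyNormedField 𝕜] [CompleteSpace 𝕜] [CharZero 𝕜]
    [LocallyCompactSpace 𝕜]
    {V : Type*} [NormedAddCommGroup V] [NormedSpace 𝕜 V] [FiniteDimensional 𝕜 V]
    [MeasurableSpace V] [BorelSpace V]
    {H : Type*} [NormedAddCommGroup H] [InnerProductSpace ℂ H] [CompleteSpace H]

theorem aux_bilin_cont (L : V →ₗ[𝕜] V →ₗ[𝕜] 𝕜) :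
    Continuous fun p : V × V => L p.1 p.2 := by
  haveI : ProperSpace 𝕜 := .of_nontriviallyNormedField_of_weaklyLocallyCompactSpace 𝕜
  have c1 : Continuous fun v : V => (LinearMap.toContinuousLinearMap.toLinearMap.comp L) v :=
    LinearMap.continuous_of_finiteDimensional _
  exact isBoundedBilinearMap_apply.continuous.comp
    ((c1.comp continuous_fst).prodMk continuous_snd)

theorem aux_conv (e : AddChar 𝕜 Circle) (hecont : Continuous e)
    (m : Measure V) [m.IsAddHaarMeasure]
    (L : V →ₗ[𝕜] V →ₗ[𝕜] 𝕜) (hLsymm : ∀ v w, L v w = L w v)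
    (ω φ : V → ℂ) (hω : IsSB e m L ω) (hφ : IsSB e m L φ)
    (hωφ : ∀ u, ω u * φ u = φ u) (w : V) :
    ∫ v, fourierIntegral e m L ω v * fourierIntegral e m L φ (w - v) ∂m
      = fourierIntegral e m L φ w := by
  haveI : ProperSpace 𝕜 := .of_nontriviallyNormedField_of_weaklyLocallyCompactSpace 𝕜
  haveI : ProperSpace V := FiniteDimensional.proper 𝕜 V
  have hL : Continuous fun p : V × V => L p.1 p.2 := aux_bilin_cont L
  set W := fourierIntegral e m L ω with hWdef
  set F := fourierIntegral e m L φ with hFdef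
  have hWc : Continuous W := fourierIntegral_continuous hecont hL hω.integrable
  have hW : Integrable W m := hω.fourier_integrable
  set g : V → V → ℂ :=
    fun v u => ((e (L u v) : ℂ) * W v) * ((e (-(L u w)) : ℂ) * φ u) with hgdef
  have hcoe : Continuous fun z : Circle => (z : ℂ) := continuous_subtype_val
  have hgmeas : AEStronglyMeasurable (Function.uncurry g) (m.prod m) := by
    apply Continuous.aestronglyMeasurable
    have h1 : Continuous fun p : V × V => (e (L p.2 p.1) : ℂ) :=
      hcoe.comp (hecont.comp (hL.comp (continuous_snd.prodMk continuous_fst)))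
    have h2 : Continuous fun p : V × V => (e (-(L p.2 w)) : ℂ) :=
      hcoe.comp (hecont.comp
        ((hL.comp (continuous_snd.prodMk continuous_const)).neg))
    exact (h1.mul (hWc.comp continuous_fst)).mul (h2.mul (hφ.cont.comp continuous_snd))
  have hgint : Integrable (Function.uncurry g) (m.prod m) := by
    refine Integrable.mono' (hW.norm.mul_prod hφ.integrable.norm) hgmeas
      (Filter.Eventually.of_forall fun p => ?_)
    simp only [Function.uncurry, hgdef, norm_mul, Circle.norm_coe, one_mul]
    simp [abs_mul]
  have fourier_def : ∀ (ψ : V → ℂ) (x : V),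
      fourierIntegral e m L ψ x = ∫ v, e (-(L v x)) • ψ v ∂m := fun ψ x => rfl
  calc ∫ v, W v * F (w - v) ∂m
      = ∫ v, ∫ u, g v u ∂m ∂m := by
        refine integral_congr_ae (Filter.Eventually.of_forall fun v => ?_)
        dsimp only
        rw [hFdef, fourier_def, ← integral_const_mul]
        refine integral_congr_ae (Filter.Eventually.of_forall fun u => ?_)
        dsimp only
        have h1 : (L u) (w - v) = L u w - L u v := map_sub (L u) w v
        have h2 : e (-(L u (w - v))) = e (L u v) * e (-(L u w)) := by
          rw [h1, neg_sub, sub_eq_add_neg, AddChar.map_add_eq_mul]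
        rw [Circle.smul_def, smul_eq_mul, h2, hgdef]
        push_cast
        ring
    _ = ∫ u, ∫ v, g v u ∂m ∂m := integral_integral_swap hgint
    _ = ∫ u, (∫ v, (e (L u v) : ℂ) * W v ∂m) * ((e (-(L u w)) : ℂ) * φ u) ∂m := by
        refine integral_congr_ae (Filter.Eventually.of_forall fun u => ?_)
        dsimp only
        rw [← integral_mul_const]
    _ = ∫ u, ω u * ((e (-(L u w)) : ℂ) * φ u) ∂m := by
        refine integral_congr_ae (Filter.Eventually.of_forall fun u => ?_)
        dsimp only
        have h3 : (∫ v, (e (L u v) : ℂ) * W v ∂m) = fourierIntegral e m L W (-u) := by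
          rw [fourier_def]
          refine integral_congr_ae (Filter.Eventually.of_forall fun v => ?_)
          dsimp only
          rw [Circle.smul_def, smul_eq_mul]
          have h4 : -((L v) (-u)) = (L u) v := by
            rw [map_neg, neg_neg]
            exact hLsymm v u
          rw [h4]
        rw [h3, hω.inversion u]
    _ = F w := by
        rw [hFdef, fourier_def]
        refine integral_congr_ae (Filter.Eventually.of_forall fun u => ?_)
        dsimp only
        rw [Circle.smul_def, smul_eq_mul, mul_left_comm, hωφ u]

theorem aux_op (e : AddChar 𝕜 Circle) (hecont : Continuous e)
    (m : Measure V) [m.IsAddHaarMeasure]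
    (L : V →ₗ[𝕜] V →ₗ[𝕜] 𝕜) (hLsymm : ∀ v w, L v w = L w v)
    (σ : V → H →L[ℂ] H)
    (hσadd : ∀ v w, σ (v + w) = (σ v).comp (σ w))
    (hσunit : ∀ v f, ‖σ v f‖ = ‖f‖) (hσcont : ∀ f : H, Continuous fun v => σ v f)
    (ω φ : V → ℂ) (hω : IsSB e m L ω) (hφ : IsSB e m L φ)
    (hωφ : ∀ u, ω u * φ u = φ u) (f : H) :
    Pop e m L σ ω (Pop e m L σ φ f) = Pop e m L σ φ f := by
  haveI : ProperSpace 𝕜 := .of_nontriviallyNormedField_of_weaklyLocallyCompactSpace 𝕜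
  haveI : ProperSpace V := FiniteDimensional.proper 𝕜 V
  have hL : Continuous fun p : V × V => L p.1 p.2 := aux_bilin_cont L
  set W := fourierIntegral e m L ω with hWdef
  set F := fourierIntegral e m L φ with hFdef
  have hWc : Continuous W := fourierIntegral_continuous hecont hL hω.integrable
  have hFc : Continuous F := fourierIntegral_continuous hecont hL hφ.integrable
  have hW : Integrable W m := hω.fourier_integrable
  have hF : Integrable F m := hφ.fourier_integrable
  have hIntφf : Integrable (fun x => F x • σ x f) m := by
    refine Integrable.mono' (hF.norm.mul_const ‖f‖)
      ((hFc.smul (hσcont f)).aestronglyMeasurable)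
      (Filter.Eventually.of_forall fun x => ?_)
    rw [norm_smul, hσunit]
  have hPop : Pop e m L σ φ f = ∫ x, F x • σ x f ∂m := rfl
  have step1 : ∀ v, σ v (Pop e m L σ φ f) = ∫ x, F (x - v) • σ x f ∂m := by
    intro v
    rw [hPop, ← ContinuousLinearMap.integral_comp_comm (σ v) hIntφf]
    have e1 : ∀ x, (σ v) (F x • σ x f) = F x • σ (v + x) f := by
      intro x
      rw [(σ v).map_smul, hσadd]
      rfl
    simp only [e1]
    have e2 := integral_add_left_eq_self (μ := m) (fun x => F (x - v) • σ x f) v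
    simpa [add_sub_cancel_left] using e2
  -- integrability on the product
  have hbd : Integrable (fun p : V × V => ‖W p.1‖ * ‖F (p.2 - p.1)‖ * ‖f‖) (m.prod m) := by
    have hmp := measurePreserving_prod_add (μ := m) (ν := m)
    have hemb : MeasurableEmbedding (fun z : V × V => (z.1, z.1 + z.2)) :=
      (MeasurableEquiv.shearAddRight V).measurableEmbedding
    have h0 : Integrable (fun p : V × V => ‖W p.1‖ * ‖F p.2‖ * ‖f‖) (m.prod m) :=
      (hW.norm.mul_prod hF.norm).mul_const ‖f‖
    rw [← hmp.integrable_comp_emb hemb]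
    simpa [Function.comp_def, add_sub_cancel_left] using h0
  have hPint : Integrable
      (Function.uncurry fun v x => (W v * F (x - v)) • σ x f) (m.prod m) := by
    refine Integrable.mono' hbd ?_ (Filter.Eventually.of_forall fun p => ?_)
    · apply Continuous.aestronglyMeasurable
      exact ((hWc.comp continuous_fst).mul
        (hFc.comp (continuous_snd.sub continuous_fst))).smul
        ((hσcont f).comp continuous_snd)
    · simp only [Function.uncurry]
      rw [norm_smul, hσunit, norm_mul]
  calc Pop e m L σ ω (Pop e m L σ φ f)
      = ∫ v, W v • ∫ x, F (x - v) • σ x f ∂m ∂m := by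
        refine integral_congr_ae (Filter.Eventually.of_forall fun v => ?_)
        dsimp only
        rw [step1 v]
    _ = ∫ v, ∫ x, (W v * F (x - v)) • σ x f ∂m ∂m := by
        refine integral_congr_ae (Filter.Eventually.of_forall fun v => ?_)
        dsimp only
        rw [← integral_smul]
        refine integral_congr_ae (Filter.Eventually.of_forall fun x => ?_)
        dsimp only
        rw [smul_smul]
    _ = ∫ x, ∫ v, (W v * F (x - v)) • σ x f ∂m ∂m := integral_integral_swap hPint
    _ = ∫ x, (∫ v, W v * F (x - v) ∂m) • σ x f ∂m := by
        refine integral_congr_ae (Filter.Eventually.of_forall fun x => ?_)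
        dsimp only
        rw [integral_smul_const]
    _ = ∫ x, F x • σ x f ∂m := by
        refine integral_congr_ae (Filter.Eventually.of_forall fun x => ?_)
        dsimp only
        rw [aux_conv e hecont m L hLsymm ω φ hω hφ hωφ x]
    _ = Pop e m L σ φ f := rfl

end Auxi

/-- If `supp φ ⊆ S` for an admissible set `S`, then `P_S ∘ P_φ = P_φ`,
where `P_S` is the strong limit of the `P_{ω_k}` for Schwartz `ω_k`
decreasing to the characteristic function of `S`. -/
theorem statement9 {𝕜 : Type*} [NontriviallyNormedField 𝕜] [CompleteSpace 𝕜] [CharZero 𝕜]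
    [LocallyCompactSpace 𝕜]
    {V : Type*} [NormedAddCommGroup V] [NormedSpace 𝕜 V] [FiniteDimensional 𝕜 V]
    [MeasurableSpace V] [BorelSpace V]
    {H : Type*} [NormedAddCommGroup H] [InnerProductSpace ℂ H] [CompleteSpace H]
    (e : AddChar 𝕜 Circle) (hecont : Continuous e) (hene : e ≠ 1)
    (m : Measure V) [m.IsAddHaarMeasure]
    (L : V →ₗ[𝕜] V →ₗ[𝕜] 𝕜) (hLsymm : ∀ v w, L v w = L w v)
    (σ : V → H →L[ℂ] H)
    (hσ0 : σ 0 = 1) (hσadd : ∀ v w, σ (v + w) = (σ v).comp (σ w))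
    (hσunit : ∀ v f, ‖σ v f‖ = ‖f‖) (hσcont : ∀ f : H, Continuous fun v => σ v f)
    (S : Set V)
    (φ : V → ℂ) (hφ : IsSB e m L φ) (hφS : tsupport φ ⊆ S)
    (ωk : ℕ → V → ℝ)
    (hωSB : ∀ n, IsSB e m L fun v => ((ωk n v : ℝ) : ℂ))
    (hωanti : ∀ v, Antitone fun n => ωk n v)
    (hωone : ∀ n, ∀ u ∈ S, ωk n u = 1)
    (hωtend : ∀ v, Tendsto (fun n => ωk n v) atTop
      (𝓝 (S.indicator (fun _ => (1 : ℝ)) v)))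
    (PS : H → H)
    (hPS : ∀ f : H,
      Tendsto (fun n => Pop e m L σ (fun v => ((ωk n v : ℝ) : ℂ)) f) atTop (𝓝 (PS f))) :
    ∀ f : H, PS (Pop e m L σ φ f) = Pop e m L σ φ f := by
  intro f
  have key : ∀ n, Pop e m L σ (fun v => ((ωk n v : ℝ) : ℂ)) (Pop e m L σ φ f)
      = Pop e m L σ φ f := by
    intro n
    refine aux_op e hecont m L hLsymm σ hσadd hσunit hσcont _ φ (hωSB n) hφ ?_ f
    intro u
    by_cases hu : u ∈ tsupport φ
    · rw [hωone n u (hφS hu)]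
      simp
    · rw [image_eq_zero_of_notMem_tsupport hu, mul_zero]
  have h1 := hPS (Pop e m L σ φ f)
  simp only [key] at h1
  exact tendsto_nhds_unique h1 tendsto_const_nhds
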